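/- Let K be a finite acyclic quiver, s a sink with a unique incoming arrow α : q → s, and M a K-representation with M(s) ≅ k ≅ M(q) and M(α) ≠ 0. Then there is an exact sequence 0 → E_s → M → C → 0 with C(s) = 0, and End_K(C) ≅ End_K(M) and Ext¹_K(M, M) ≅ Ext¹_K(C, C). In particular, if M is indecomposable (resp. exceptional) then so is C. -/

import Mathlib

set_option maxHeartbeats 1000000

lemma aux_bij {k : Type} {M N : Type*} [Field k] [AddCommGroup M] [Module k M]
    [AddCommGroup N] [Module k N] [FiniteDimensional k M] [FiniteDimensional k N]
    (h1 : Module.finrank k M = 1) (h2 : Module.finrank k N = 1)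
    (f : M →ₗ[k] N) (hf : f ≠ 0) : Function.Bijective f := by
  obtain ⟨x, hx⟩ : ∃ x, f x ≠ 0 := by
    by_contra h; push_neg at h; exact hf (LinearMap.ext fun x => by simp [h x])
  have hx0 : x ≠ 0 := fun h => hx (by simp [h])
  have hsM : Submodule.span k {x} = ⊤ :=
    Submodule.eq_top_of_finrank_eq (by rw [finrank_span_singleton hx0, h1])
  have hsN : Submodule.span k {f x} = ⊤ :=
    Submodule.eq_top_of_finrank_eq (by rw [finrank_span_singleton hx, h2])
  constructor
  · rw [← LinearMap.ker_eq_bot, Submodule.eq_bot_iff]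
    intro y hy
    have : y ∈ Submodule.span k {x} := hsM ▸ Submodule.mem_top
    obtain ⟨c, rfl⟩ := Submodule.mem_span_singleton.mp this
    have hc : c • f x = 0 := by simpa using hy
    rcases smul_eq_zero.mp hc with h | h
    · simp [h]
    · exact absurd h hx
  · intro z
    have : z ∈ Submodule.span k {f x} := hsN ▸ Submodule.mem_top
    obtain ⟨c, rfl⟩ := Submodule.mem_span_singleton.mp this
    exact ⟨c • x, by simp⟩



/-- Let `s` be a sink of a finite acyclic quiver with a unique incoming arrow `α : q → s`,
and let `M = (W, f)` be a representation with `W s ≅ k ≅ W q` and `f α ≠ 0`.  Then there is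
an exact sequence `0 → E_s → M → C → 0` (realised by a morphism `π : M → C` which is
bijective away from `s`, with `C` vanishing at `s`), with `End(C) ≅ End(M)` and
`Ext¹(M, M) ≅ Ext¹(C, C)` (realised as cokernels of the maps `D`); in particular
indecomposability passes from `M` to `C`. -/
theorem stmt_16 {k V E : Type} [Field k] [Fintype V] [Fintype E]
    (src tgt : E → V) (ht : V → ℕ) (hacyc : ∀ e, ht (src e) < ht (tgt e))
    (s : V) (hsink : ∀ e, src e ≠ s)
    (α : E) (hα : tgt α = s) (huniq : ∀ e, tgt e = s → e = α)
    (W : V → ModuleCat k) (hfd : ∀ v, FiniteDimensional k (W v))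
    (f : ∀ e, W (src e) →ₗ[k] W (tgt e))
    (hs1 : Module.finrank k (W s) = 1)
    (hq1 : Module.finrank k (W (src α)) = 1)
    (hfα : f α ≠ 0)
    (DM : (∀ v, W v →ₗ[k] W v) →ₗ[k] (∀ e, W (src e) →ₗ[k] W (tgt e)))
    (hDM : ∀ η e, DM η e = f e ∘ₗ η (src e) - η (tgt e) ∘ₗ f e) :
    ∃ (WC : V → ModuleCat k) (fC : ∀ e, WC (src e) →ₗ[k] WC (tgt e))
      (π : ∀ v, W v →ₗ[k] WC v),
      -- `π : M → C` is a morphism of representations, bijective away from `s`,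
      -- with `C` vanishing at `s` (so `0 → E_s → M → C → 0` is exact)
      (∀ e x, π (tgt e) (f e x) = fC e (π (src e) x)) ∧
      Subsingleton (WC s) ∧
      (∀ v, v ≠ s → Function.Bijective (π v)) ∧
      -- `End(C) ≅ End(M)`
      (∃ Φ : {η : ∀ v, W v →ₗ[k] W v //
                ∀ e x, η (tgt e) (f e x) = f e (η (src e) x)} →
             {η : ∀ v, WC v →ₗ[k] WC v //
                ∀ e x, η (tgt e) (fC e x) = fC e (η (src e) x)},
        Function.Bijective Φ ∧
        (∀ a b c : {η : ∀ v, W v →ₗ[k] W v //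
            ∀ e x, η (tgt e) (f e x) = f e (η (src e) x)},
          (∀ v, c.1 v = a.1 v + b.1 v) → ∀ v, (Φ c).1 v = (Φ a).1 v + (Φ b).1 v) ∧
        (∀ a b c : {η : ∀ v, W v →ₗ[k] W v //
            ∀ e x, η (tgt e) (f e x) = f e (η (src e) x)},
          (∀ v, c.1 v = a.1 v ∘ₗ b.1 v) → ∀ v, (Φ c).1 v = (Φ a).1 v ∘ₗ (Φ b).1 v)) ∧
      -- `Ext¹(M,M) ≅ Ext¹(C,C)`, both realised as cokernels
      (∃ DC : (∀ v, WC v →ₗ[k] WC v) →ₗ[k] (∀ e, WC (src e) →ₗ[k] WC (tgt e)),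
        (∀ η e, DC η e = fC e ∘ₗ η (src e) - η (tgt e) ∘ₗ fC e) ∧
        Nonempty (((∀ e, W (src e) →ₗ[k] W (tgt e)) ⧸ LinearMap.range DM) ≃ₗ[k]
          ((∀ e, WC (src e) →ₗ[k] WC (tgt e)) ⧸ LinearMap.range DC))) ∧
      -- in particular, indecomposability passes from `M` to `C`
      ((∀ η : ∀ v, W v →ₗ[k] W v,
          (∀ e x, η (tgt e) (f e x) = f e (η (src e) x)) →
          (∀ v, η v ∘ₗ η v = η v) → (∀ v, η v = 0) ∨ (∀ v, η v = LinearMap.id)) →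
        (∀ η : ∀ v, WC v →ₗ[k] WC v,
          (∀ e x, η (tgt e) (fC e x) = fC e (η (src e) x)) →
          (∀ v, η v ∘ₗ η v = η v) → (∀ v, η v = 0) ∨ (∀ v, η v = LinearMap.id))) := by
  classical
  subst hα
  haveI := hfd (src α)
  haveI := hfd (tgt α)
  have hbij : Function.Bijective (f α) := aux_bij (k := k) (M := ↥(W (src α))) (N := ↥(W (tgt α))) hq1 hs1 (f α) hfα
  let fαe : W (src α) ≃ₗ[k] W (tgt α) := LinearEquiv.ofBijective (f α) hbij
  have hfαe : fαe.toLinearMap = f α := rfl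
  let S : ∀ v, Submodule k (W v) := fun v => if v = tgt α then ⊤ else ⊥
  have hSsrc : ∀ e, S (src e) = ⊥ := fun e => if_neg (hsink e)
  have hSne : ∀ v, v ≠ tgt α → S v = ⊥ := fun v hv => if_neg hv
  have hSle : ∀ v (g : W v →ₗ[k] W v), S v ≤ (S v).comap g := by
    intro v g
    by_cases h : v = tgt α
    · simp [S, h]
    · simp [S, h]
  let WC : V → ModuleCat k := fun v => ModuleCat.of k (W v ⧸ S v)
  let π : ∀ v, W v →ₗ[k] WC v := fun v => (S v).mkQ
  let fC : ∀ e, WC (src e) →ₗ[k] WC (tgt e) :=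
    fun e => Submodule.mapQ (S (src e)) (S (tgt e)) (f e) (by rw [hSsrc e]; exact bot_le)
  have hCs : Subsingleton (WC (tgt α)) :=
    (Submodule.Quotient.subsingleton_iff (p := S (tgt α))).mpr (if_pos rfl)
  have hinj : ∀ v, v ≠ tgt α → ∀ x y : W v, π v x = π v y → x = y := by
    intro v hv x y h
    have := (Submodule.Quotient.eq (S v)).mp h
    rw [hSne v hv] at this
    simpa [sub_eq_zero] using this
  let σ : ∀ v, WC v →ₗ[k] W v := fun v =>
    if h : v = tgt α then 0 else
      (S v).liftQ LinearMap.id (by rw [hSne v h, LinearMap.ker_id])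
  have hσπ : ∀ v (h : v ≠ tgt α) (x : W v), σ v (π v x) = x := by
    intro v h x
    show (if h : v = tgt α then 0 else (S v).liftQ LinearMap.id _) ((S v).mkQ x) = x
    rw [dif_neg h]
    rfl
  have hπσ : ∀ v (h : v ≠ tgt α) (y : WC v), π v (σ v y) = y := by
    intro v h y
    obtain ⟨x, rfl⟩ := Submodule.mkQ_surjective _ y
    exact congrArg (π v) (hσπ v h x)
  have hquot : ∀ v (y : WC v), ∃ x : W v, π v x = y := fun v => Submodule.mkQ_surjective _
  have hfα_surj : Function.Surjective (f α) := hbij.2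
  let ΦF : (∀ v, W v →ₗ[k] W v) → (∀ v, WC v →ₗ[k] WC v) :=
    fun η v => Submodule.mapQ (S v) (S v) (η v) (hSle v (η v))
  have hΦmor : ∀ (η : ∀ v, W v →ₗ[k] W v),
      (∀ e x, η (tgt e) (f e x) = f e (η (src e) x)) →
      ∀ e (y : WC (src e)), ΦF η (tgt e) (fC e y) = fC e (ΦF η (src e) y) := by
    intro η hη e y
    obtain ⟨x, rfl⟩ := hquot _ y
    show π (tgt e) (η (tgt e) (f e x)) = π (tgt e) (f e (η (src e) x))
    exact congrArg _ (hη e x)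
  have hΦinj : ∀ (η θ : ∀ v, W v →ₗ[k] W v),
      (∀ e x, η (tgt e) (f e x) = f e (η (src e) x)) →
      (∀ e x, θ (tgt e) (f e x) = f e (θ (src e) x)) →
      (∀ v, ΦF η v = ΦF θ v) → ∀ v, η v = θ v := by
    intro η θ hη hθ h
    have hne : ∀ v, v ≠ tgt α → η v = θ v := by
      intro v hv
      apply LinearMap.ext; intro x
      apply hinj v hv
      show ΦF η v (π v x) = ΦF θ v (π v x)
      rw [h v]
    intro v
    by_cases hv : v = tgt α
    · subst hv
      apply LinearMap.ext; intro y
      obtain ⟨x, rfl⟩ := hfα_surj y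
      rw [hη α x, hθ α x, hne (src α) (hsink α)]
    · exact hne v hv
  have hΦsurj : ∀ (θ : ∀ v, WC v →ₗ[k] WC v),
      (∀ e x, θ (tgt e) (fC e x) = fC e (θ (src e) x)) →
      ∃ η : ∀ v, W v →ₗ[k] W v,
        (∀ e x, η (tgt e) (f e x) = f e (η (src e) x)) ∧ ∀ v, ΦF η v = θ v := by
    intro θ hθ
    set base : ∀ v, W v →ₗ[k] W v := fun v => σ v ∘ₗ θ v ∘ₗ (S v).mkQ with hbasedef
    refine ⟨Function.update base (tgt α)
        (fαe.toLinearMap ∘ₗ base (src α) ∘ₗ fαe.symm.toLinearMap), ?_, ?_⟩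
    case _ =>
      set η := Function.update base (tgt α)
        (fαe.toLinearMap ∘ₗ base (src α) ∘ₗ fαe.symm.toLinearMap) with hηdef
      have hηs : η (tgt α) = fαe.toLinearMap ∘ₗ base (src α) ∘ₗ fαe.symm.toLinearMap :=
        Function.update_self _ _ _
      have hηne : ∀ v, v ≠ tgt α → η v = base v := fun v hv => Function.update_of_ne hv _ _
      have hbase : ∀ e, e ≠ α → ∀ x, base (tgt e) (f e x) = f e (base (src e) x) := by
        intro e he x
        have hte : tgt e ≠ tgt α := fun h => he (huniq e h)
        show σ (tgt e) (θ (tgt e) (π (tgt e) (f e x)))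
            = f e (σ (src e) (θ (src e) (π (src e) x)))
        have step1 : θ (tgt e) (π (tgt e) (f e x)) = fC e (θ (src e) (π (src e) x)) :=
          hθ e (π (src e) x)
        rw [step1, ← hπσ (src e) (hsink e) (θ (src e) (π (src e) x))]
        show σ (tgt e) (π (tgt e) (f e (σ (src e) (θ (src e) (π (src e) x))))) = _
        rw [hσπ (tgt e) hte, hπσ (src e) (hsink e)]
      intro e x
      by_cases he : e = α
      · subst e
        rw [hηs, hηne (src α) (hsink α)]
        show fαe (base (src α) (fαe.symm (f α x))) = f α (base (src α) x)
        rw [← hfαe]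
        show fαe (base (src α) (fαe.symm (fαe x))) = fαe (base (src α) x)
        rw [fαe.symm_apply_apply]
      · have hte : tgt e ≠ tgt α := fun h => he (huniq e h)
        rw [hηne (tgt e) hte, hηne (src e) (hsink e)]
        exact hbase e he x
    case _ =>
      set η := Function.update base (tgt α)
        (fαe.toLinearMap ∘ₗ base (src α) ∘ₗ fαe.symm.toLinearMap) with hηdef
      have hηne : ∀ v, v ≠ tgt α → η v = base v := fun v hv => Function.update_of_ne hv _ _
      intro v
      by_cases hv : v = tgt α
      · subst hv
        haveI := hCs
        apply LinearMap.ext; intro y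
        exact Subsingleton.elim _ _
      · apply LinearMap.ext; intro y
        obtain ⟨x, rfl⟩ := hquot v y
        show π v (η v x) = θ v (π v x)
        rw [hηne v hv]
        show π v (σ v (θ v (π v x))) = θ v (π v x)
        exact hπσ v hv _
  have hΦadd : ∀ (a b c : ∀ v, W v →ₗ[k] W v), (∀ v, c v = a v + b v) →
      ∀ v, ΦF c v = ΦF a v + ΦF b v := by
    intro a b c hc v
    by_cases hv : v = tgt α
    · subst hv; haveI := hCs
      apply LinearMap.ext; intro y; exact Subsingleton.elim _ _
    · apply LinearMap.ext; intro y
      obtain ⟨x, rfl⟩ := hquot v y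
      rw [LinearMap.add_apply]
      show π v (c v x) = π v (a v x) + π v (b v x)
      rw [hc v]
      show π v (a v x + b v x) = _
      exact map_add _ _ _
  have hΦmul : ∀ (a b c : ∀ v, W v →ₗ[k] W v), (∀ v, c v = a v ∘ₗ b v) →
      ∀ v, ΦF c v = ΦF a v ∘ₗ ΦF b v := by
    intro a b c hc v
    by_cases hv : v = tgt α
    · subst hv; haveI := hCs
      apply LinearMap.ext; intro y; exact Subsingleton.elim _ _
    · apply LinearMap.ext; intro y
      obtain ⟨x, rfl⟩ := hquot v y
      rw [LinearMap.comp_apply]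
      show π v (c v x) = ΦF a v (π v (b v x))
      rw [hc v]
      rfl
  -- the Ext data
  let DC : (∀ v, WC v →ₗ[k] WC v) →ₗ[k] (∀ e, WC (src e) →ₗ[k] WC (tgt e)) :=
    { toFun := fun η e => fC e ∘ₗ η (src e) - η (tgt e) ∘ₗ fC e
      map_add' := by
        intro a b
        funext e
        show fC e ∘ₗ (a (src e) + b (src e)) - (a (tgt e) + b (tgt e)) ∘ₗ fC e = _
        rw [LinearMap.comp_add, LinearMap.add_comp]
        show _ = (fC e ∘ₗ a (src e) - a (tgt e) ∘ₗ fC e)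
            + (fC e ∘ₗ b (src e) - b (tgt e) ∘ₗ fC e)
        abel
      map_smul' := by
        intro c a
        funext e
        show fC e ∘ₗ (c • a (src e)) - (c • a (tgt e)) ∘ₗ fC e = _
        rw [LinearMap.comp_smul, LinearMap.smul_comp]
        exact (smul_sub c _ _).symm }
  have hDC : ∀ η e, DC η e = fC e ∘ₗ η (src e) - η (tgt e) ∘ₗ fC e := fun η e => rfl
  let P : (∀ e, W (src e) →ₗ[k] W (tgt e)) →ₗ[k] (∀ e, WC (src e) →ₗ[k] WC (tgt e)) :=
    { toFun := fun g e => Submodule.mapQ (S (src e)) (S (tgt e)) (g e)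
        (by rw [hSsrc e]; exact bot_le)
      map_add' := by
        intro a b; funext e
        apply LinearMap.ext; intro y
        obtain ⟨x, rfl⟩ := hquot (src e) y
        show π (tgt e) (a e x + b e x) = π (tgt e) (a e x) + π (tgt e) (b e x)
        exact map_add _ _ _
      map_smul' := by
        intro c a; funext e
        apply LinearMap.ext; intro y
        obtain ⟨x, rfl⟩ := hquot (src e) y
        show π (tgt e) (c • a e x) = c • π (tgt e) (a e x)
        exact map_smul _ _ _ }
  have hPapp : ∀ g e (x : W (src e)), P g e (π (src e) x) = π (tgt e) (g e x) :=
    fun g e x => rfl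
  have hPD : ∀ η : (∀ v, W v →ₗ[k] W v), P (DM η) = DC (ΦF η) := by
    intro η
    funext e
    apply LinearMap.ext; intro y
    obtain ⟨x, rfl⟩ := hquot (src e) y
    rw [hPapp, hDM η e]
    show π (tgt e) ((f e ∘ₗ η (src e) - η (tgt e) ∘ₗ f e) x)
        = (fC e ∘ₗ ΦF η (src e) - ΦF η (tgt e) ∘ₗ fC e) (π (src e) x)
    rw [LinearMap.sub_apply, LinearMap.sub_apply, LinearMap.comp_apply, LinearMap.comp_apply,
      LinearMap.comp_apply, LinearMap.comp_apply, map_sub]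
    rfl
  have hPsurj : Function.Surjective P := by
    intro h
    refine ⟨fun e => σ (tgt e) ∘ₗ h e ∘ₗ (S (src e)).mkQ, ?_⟩
    funext e
    by_cases he : e = α
    · subst e
      haveI := hCs
      apply LinearMap.ext; intro y; exact Subsingleton.elim _ _
    · have hte : tgt e ≠ tgt α := fun hh => he (huniq e hh)
      apply LinearMap.ext; intro y
      obtain ⟨x, rfl⟩ := hquot (src e) y
      show π (tgt e) (σ (tgt e) (h e (π (src e) x))) = h e (π (src e) x)
      exact hπσ (tgt e) hte _
  have hker : ∀ g, P g ∈ LinearMap.range DC → g ∈ LinearMap.range DM := by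
    rintro g ⟨θ, hθg⟩
    set η₀ : ∀ v, W v →ₗ[k] W v := fun v => σ v ∘ₗ θ v ∘ₗ (S v).mkQ with hη₀
    have hR : ∀ v, ΦF η₀ v = θ v := by
      intro v
      by_cases hv : v = tgt α
      · subst hv; haveI := hCs
        apply LinearMap.ext; intro y; exact Subsingleton.elim _ _
      · apply LinearMap.ext; intro y
        obtain ⟨x, rfl⟩ := hquot v y
        show π v (σ v (θ v (π v x))) = θ v (π v x)
        exact hπσ v hv _
    have hPg : P (DM η₀) = P g := by
      rw [hPD η₀, show ΦF η₀ = θ from funext hR, hθg]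
    have hdiff : ∀ e, e ≠ α → g e = DM η₀ e := by
      intro e he
      have hte : tgt e ≠ tgt α := fun hh => he (huniq e hh)
      apply LinearMap.ext; intro x
      apply hinj (tgt e) hte
      have h1 := LinearMap.congr_fun (congrFun hPg e) (π (src e) x)
      rw [hPapp, hPapp] at h1
      exact h1.symm
    set δ : W (src α) →ₗ[k] W (tgt α) := g α - DM η₀ α with hδ
    set η₁ : ∀ v, W v →ₗ[k] W v :=
      Function.update (fun v => (0 : W v →ₗ[k] W v)) (tgt α)
        (-(δ ∘ₗ fαe.symm.toLinearMap)) with hη₁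
    refine ⟨η₀ + η₁, ?_⟩
    funext e
    have hsum : DM (η₀ + η₁) e = DM η₀ e + DM η₁ e := by rw [map_add]; rfl
    rw [hsum]
    by_cases he : e = α
    · subst e
      have h1 : DM η₁ α = δ := by
        rw [hDM]
        have hsrc1 : η₁ (src α) = 0 := Function.update_of_ne (hsink α) _ _
        have htgt1 : η₁ (tgt α) = -(δ ∘ₗ fαe.symm.toLinearMap) := Function.update_self _ _ _
        rw [hsrc1, htgt1]
        apply LinearMap.ext; intro x
        show f α ((0 : W (src α) →ₗ[k] W (src α)) x) - (-(δ ∘ₗ fαe.symm.toLinearMap)) (f α x) = δ x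
        rw [LinearMap.zero_apply, map_zero, LinearMap.neg_apply, LinearMap.comp_apply]
        show 0 - -(δ (fαe.symm (fαe x))) = δ x
        rw [fαe.symm_apply_apply, zero_sub, neg_neg]
      rw [h1, hδ]
      abel
    · have hte : tgt e ≠ tgt α := fun hh => he (huniq e hh)
      have h1 : DM η₁ e = 0 := by
        rw [hDM]
        have hsrc1 : η₁ (src e) = 0 := Function.update_of_ne (hsink e) _ _
        have htgt1 : η₁ (tgt e) = 0 := Function.update_of_ne hte _ _
        rw [hsrc1, htgt1]
        simp
      rw [h1, add_zero]
      exact (hdiff e he).symm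
  have hrange_le : LinearMap.range DM ≤ LinearMap.ker ((LinearMap.range DC).mkQ ∘ₗ P) := by
    rintro _ ⟨η, rfl⟩
    rw [LinearMap.mem_ker, LinearMap.comp_apply, hPD η, Submodule.mkQ_apply,
      Submodule.Quotient.mk_eq_zero]
    exact ⟨ΦF η, rfl⟩
  have hFker : LinearMap.ker ((LinearMap.range DC).mkQ ∘ₗ P) ≤ LinearMap.range DM := by
    intro g hg
    rw [LinearMap.mem_ker, LinearMap.comp_apply, Submodule.mkQ_apply,
      Submodule.Quotient.mk_eq_zero] at hg
    exact hker g hg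
  let F := (LinearMap.range DM).liftQ ((LinearMap.range DC).mkQ ∘ₗ P) hrange_le
  have hFinj : Function.Injective F :=
    LinearMap.ker_eq_bot.mp (Submodule.ker_liftQ_eq_bot _ _ hrange_le hFker)
  have hFsurj : Function.Surjective F := by
    intro y
    obtain ⟨h, rfl⟩ := Submodule.mkQ_surjective _ y
    obtain ⟨g, rfl⟩ := hPsurj h
    exact ⟨Submodule.Quotient.mk g, rfl⟩
  -- glue to a copy living in the universe required by the statement
  have hfdQ : ∀ v, FiniteDimensional k (WC v) := fun v => by
    haveI := hfd v
    exact FiniteDimensional.finiteDimensional_quotient (S v)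
  let WD : V → ModuleCat k := fun v =>
    ModuleCat.of k (ULift.{u_2} (Fin (Module.finrank k (WC v)) → k))
  let ψ : ∀ v, WC v ≃ₗ[k] WD v := fun v =>
    letI := hfdQ v
    ((Module.finBasis k (WC v)).equivFun.trans ULift.moduleEquiv.symm)
  let fD : ∀ e, WD (src e) →ₗ[k] WD (tgt e) :=
    fun e => (ψ (tgt e)).toLinearMap ∘ₗ fC e ∘ₗ (ψ (src e)).symm.toLinearMap
  let πD : ∀ v, W v →ₗ[k] WD v := fun v => (ψ v).toLinearMap ∘ₗ π v
  have hfD : ∀ e (y : WC (src e)), fD e (ψ (src e) y) = ψ (tgt e) (fC e y) := by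
    intro e y
    show ψ (tgt e) (fC e ((ψ (src e)).symm (ψ (src e) y))) = _
    rw [(ψ (src e)).symm_apply_apply]
  have hfD' : ∀ e (z : WD (src e)), (ψ (tgt e)).symm (fD e z) = fC e ((ψ (src e)).symm z) := by
    intro e z
    show (ψ (tgt e)).symm (ψ (tgt e) (fC e ((ψ (src e)).symm z))) = _
    rw [(ψ (tgt e)).symm_apply_apply]
  have hCsD : Subsingleton (WD (tgt α)) := by
    haveI := hCs
    exact Equiv.subsingleton (ψ (tgt α)).symm.toEquiv
  have hcommD : ∀ e x, πD (tgt e) (f e x) = fD e (πD (src e) x) := by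
    intro e x
    show ψ (tgt e) (π (tgt e) (f e x)) = fD e (ψ (src e) (π (src e) x))
    rw [hfD e (π (src e) x)]
    rfl
  have hconjmor :
      ∀ (θ : ∀ v, WC v →ₗ[k] WC v),
        (∀ e y, θ (tgt e) (fC e y) = fC e (θ (src e) y)) →
        ∀ e (y : WD (src e)),
          (ψ (tgt e)).conj (θ (tgt e)) (fD e y) = fD e ((ψ (src e)).conj (θ (src e)) y) := by
    intro θ hθ e y
    rw [LinearEquiv.conj_apply, LinearEquiv.conj_apply]
    show ψ (tgt e) (θ (tgt e) ((ψ (tgt e)).symm (ψ (tgt e) (fC e ((ψ (src e)).symm y)))))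
        = fD e (ψ (src e) (θ (src e) ((ψ (src e)).symm y)))
    rw [(ψ (tgt e)).symm_apply_apply, hθ e ((ψ (src e)).symm y),
      ← hfD e (θ (src e) ((ψ (src e)).symm y))]
  have hconjmor' :
      ∀ (θ' : ∀ v, WD v →ₗ[k] WD v),
        (∀ e y, θ' (tgt e) (fD e y) = fD e (θ' (src e) y)) →
        ∀ e (y : WC (src e)),
          ((ψ (tgt e)).conj.symm (θ' (tgt e))) (fC e y)
            = fC e ((ψ (src e)).conj.symm (θ' (src e)) y) := by
    intro θ' hθ' e y
    show (ψ (tgt e)).symm (θ' (tgt e) (ψ (tgt e) (fC e y)))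
        = fC e ((ψ (src e)).symm (θ' (src e) (ψ (src e) y)))
    rw [← hfD e y, hθ' e (ψ (src e) y), hfD' e]
  refine ⟨WD, fD, πD, hcommD, hCsD, ?_, ?_, ?_, ?_⟩
  · intro v hv
    have h1 : Function.Bijective (π v) :=
      ⟨fun x y h => hinj v hv x y h, Submodule.mkQ_surjective _⟩
    exact ((ψ v).bijective).comp h1
  · refine ⟨fun η => ⟨fun v => (ψ v).conj (ΦF η.1 v),
      hconjmor (ΦF η.1) (hΦmor η.1 η.2)⟩, ⟨?_, ?_⟩, ?_, ?_⟩
    · intro a b hab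
      apply Subtype.ext
      funext v
      refine hΦinj a.1 b.1 a.2 b.2 (fun u => ?_) v
      have h := congrFun (congrArg Subtype.val hab) u
      exact (ψ u).conj.injective h
    · intro θ'
      obtain ⟨η, hη1, hη2⟩ :=
        hΦsurj (fun v => (ψ v).conj.symm (θ'.1 v)) (hconjmor' θ'.1 θ'.2)
      refine ⟨⟨η, hη1⟩, Subtype.ext (funext fun v => ?_)⟩
      show (ψ v).conj (ΦF η v) = θ'.1 v
      rw [hη2 v, LinearEquiv.apply_symm_apply]
    · intro a b c hc v
      show (ψ v).conj (ΦF c.1 v) = (ψ v).conj (ΦF a.1 v) + (ψ v).conj (ΦF b.1 v)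
      rw [hΦadd a.1 b.1 c.1 hc v, map_add]
    · intro a b c hc v
      show (ψ v).conj (ΦF c.1 v) = (ψ v).conj (ΦF a.1 v) ∘ₗ (ψ v).conj (ΦF b.1 v)
      rw [hΦmul a.1 b.1 c.1 hc v, LinearEquiv.conj_comp]
  · let ΓV : (∀ v, WC v →ₗ[k] WC v) ≃ₗ[k] (∀ v, WD v →ₗ[k] WD v) :=
      LinearEquiv.piCongrRight (fun v => (ψ v).conj)
    let ΓE : (∀ e, WC (src e) →ₗ[k] WC (tgt e)) ≃ₗ[k] (∀ e, WD (src e) →ₗ[k] WD (tgt e)) :=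
      LinearEquiv.piCongrRight (fun e => LinearEquiv.arrowCongr (ψ (src e)) (ψ (tgt e)))
    let DD : (∀ v, WD v →ₗ[k] WD v) →ₗ[k] (∀ e, WD (src e) →ₗ[k] WD (tgt e)) :=
      ΓE.toLinearMap ∘ₗ DC ∘ₗ ΓV.symm.toLinearMap
    have hDD : ∀ η e, DD η e = fD e ∘ₗ η (src e) - η (tgt e) ∘ₗ fD e := by
      intro η e
      apply LinearMap.ext; intro y
      show ψ (tgt e)
          (fC e ((ψ (src e)).symm (η (src e) (ψ (src e) ((ψ (src e)).symm y))))
            - (ψ (tgt e)).symm (η (tgt e) (ψ (tgt e) (fC e ((ψ (src e)).symm y)))))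
          = (fD e ∘ₗ η (src e) - η (tgt e) ∘ₗ fD e) y
      rw [map_sub, (ψ (src e)).apply_symm_apply, (ψ (tgt e)).apply_symm_apply]
      rfl
    refine ⟨DD, hDD, ⟨(LinearEquiv.ofBijective F ⟨hFinj, hFsurj⟩).trans
      (Submodule.Quotient.equiv (LinearMap.range DC) (LinearMap.range DD) ΓE ?_)⟩⟩
    have h1 : LinearMap.range DD
        = Submodule.map (ΓE.toLinearMap) (LinearMap.range (DC ∘ₗ ΓV.symm.toLinearMap)) :=
      LinearMap.range_comp _ _
    rw [h1, LinearMap.range_comp_of_range_eq_top _ (LinearEquiv.range _)]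
  · intro hM θ' hθ'mor hθ'idem
    set θ : ∀ v, WC v →ₗ[k] WC v := fun v => ((ψ v).conj).symm (θ' v) with hθdef
    have hθmor := hconjmor' θ' hθ'mor
    have hθidem : ∀ v, θ v ∘ₗ θ v = θ v := by
      intro v
      apply ((ψ v).conj).injective
      rw [LinearEquiv.conj_comp]
      show (ψ v).conj (((ψ v).conj).symm (θ' v)) ∘ₗ (ψ v).conj (((ψ v).conj).symm (θ' v))
          = (ψ v).conj (((ψ v).conj).symm (θ' v))
      rw [LinearEquiv.apply_symm_apply, hθ'idem v]
    obtain ⟨η, hη1, hη2⟩ := hΦsurj θ hθmor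
    have hmorc : ∀ e x, (fun v => η v ∘ₗ η v) (tgt e) (f e x)
        = f e ((fun v => η v ∘ₗ η v) (src e) x) := by
      intro e x
      show η (tgt e) (η (tgt e) (f e x)) = f e (η (src e) (η (src e) x))
      rw [hη1 e x, hη1 e (η (src e) x)]
    have hidem : ∀ v, η v ∘ₗ η v = η v := by
      apply hΦinj (fun v => η v ∘ₗ η v) η hmorc hη1
      intro v
      rw [hΦmul η η (fun v => η v ∘ₗ η v) (fun _ => rfl) v, hη2 v, hθidem v]
    have hback : ∀ v, θ' v = (ψ v).conj (θ v) :=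
      fun v => (LinearEquiv.apply_symm_apply _ _).symm
    rcases hM η hη1 hidem with h0 | h1
    · left; intro v
      have hθ0 : θ v = 0 := by
        rw [← hη2 v]
        apply LinearMap.ext; intro y
        obtain ⟨x, rfl⟩ := hquot v y
        show π v (η v x) = 0
        rw [h0 v]
        simp
      rw [hback v, hθ0, map_zero]
    · right; intro v
      have hθ1 : θ v = LinearMap.id := by
        rw [← hη2 v]
        apply LinearMap.ext; intro y
        obtain ⟨x, rfl⟩ := hquot v y
        show π v (η v x) = π v x
        rw [h1 v]
        rfl
      rw [hback v, hθ1, LinearEquiv.conj_id]
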